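/- Let E be a Riesz space and let (p, q) and (p', q') be two pairs of sequences of natural numbers satisfying the deferred property with p_n ≤ p'_n and q'_n ≤ q_n for each n ∈ ℕ. Assume moreover that (p'_n − p_n)/(q_n − p_n) → 0 and (q_n − q'_n)/(q_n − p_n) → 0 as n → ∞ (so that the index gaps {k : p_n < k ≤ p'_n} and {k : q'_n < k ≤ q_n} are negligible). If x_n →^{D_{st_o}}_{p',q'} x in E, then x_n →^{D_{st_o}}_{p,q} x. -/

import Mathlib

open Filter Topology

variable {E : Type*} [AddCommGroup E] [Lattice E]
  [CovariantClass E E (· + ·) (· ≤ ·)] [Module ℝ E] [PosSMulMono ℝ E]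

/-- `p` and `q` satisfy the deferred property: `p n < q n` for all `n` and `q n → ∞`. -/
def DeferredProperty (p q : ℕ → ℕ) : Prop :=
  (∀ n, p n < q n) ∧ Tendsto q atTop atTop

open Classical in
/-- The ratio `|{k ∈ K : p n < k ≤ q n}| / (q n - p n)`. -/
noncomputable def deferredRatio (p q : ℕ → ℕ) (K : Set ℕ) (n : ℕ) : ℝ :=
  (((Finset.Ioc (p n) (q n)).filter (fun k => k ∈ K)).card : ℝ) / ((q n : ℝ) - (p n : ℝ))

/-- The deferred density of `K ⊆ ℕ` is `a`. -/
def DeferredDensity (p q : ℕ → ℕ) (K : Set ℕ) (a : ℝ) : Prop :=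
  Tendsto (deferredRatio p q K) atTop (nhds a)

/-- `z` is deferred statistical order decreasing to `0`: there is an (infinite) set
`K = {k₁ < k₂ < ⋯}` of deferred density one along which `z` is decreasing with infimum `0`. -/
def DStatDecreasing (p q : ℕ → ℕ) (z : ℕ → E) : Prop :=
  ∃ K : Set ℕ, K.Infinite ∧ DeferredDensity p q K 1 ∧
    (∀ i ∈ K, ∀ j ∈ K, i ≤ j → z j ≤ z i) ∧ IsGLB (z '' K) 0

/-- `x` is deferred statistical order convergent to `l`. -/
def DStatOrderConv (p q : ℕ → ℕ) (x : ℕ → E) (l : E) : Prop :=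
  ∃ z : ℕ → E, DStatDecreasing p q z ∧
    ∃ K : Set ℕ, K.Infinite ∧ DeferredDensity p q K 1 ∧ ∀ k ∈ K, |x k - l| ≤ z k

open Classical in
lemma density_transfer (p q p' q' : ℕ → ℕ)
    (hpq : ∀ n, p n < q n) (hpq' : ∀ n, p' n < q' n)
    (hp : ∀ n, p n ≤ p' n) (hq : ∀ n, q' n ≤ q n)
    (hgap₁ : Tendsto (fun n => ((p' n : ℝ) - (p n : ℝ)) / ((q n : ℝ) - (p n : ℝ)))
      atTop (nhds 0))
    (hgap₂ : Tendsto (fun n => ((q n : ℝ) - (q' n : ℝ)) / ((q n : ℝ) - (p n : ℝ)))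
      atTop (nhds 0))
    (K : Set ℕ) (hK : DeferredDensity p' q' K 1) : DeferredDensity p q K 1 := by
  have hden : ∀ n, (0:ℝ) < (q n : ℝ) - (p n : ℝ) := fun n =>
    sub_pos.mpr (by exact_mod_cast hpq n)
  have hden' : ∀ n, (0:ℝ) < (q' n : ℝ) - (p' n : ℝ) := fun n =>
    sub_pos.mpr (by exact_mod_cast hpq' n)
  set L : ℕ → ℝ := fun n =>
    (((Finset.Ioc (p' n) (q' n)).filter (fun k => k ∈ K)).card : ℝ) /
      ((q n : ℝ) - (p n : ℝ)) with hLdef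
  have hupper : ∀ n, deferredRatio p q K n ≤ 1 := by
    intro n
    rw [deferredRatio, div_le_one (hden n)]
    calc (((Finset.Ioc (p n) (q n)).filter (fun k => k ∈ K)).card : ℝ)
        ≤ ((Finset.Ioc (p n) (q n)).card : ℝ) := by
          exact_mod_cast Finset.card_le_card (Finset.filter_subset _ _)
      _ = (q n : ℝ) - (p n : ℝ) := by
          rw [Nat.card_Ioc, Nat.cast_sub (le_of_lt (hpq n))]
  have hlower : ∀ n, L n ≤ deferredRatio p q K n := by
    intro n
    rw [deferredRatio, hLdef]
    apply div_le_div_of_nonneg_right ?_ (hden n).le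
    exact_mod_cast Finset.card_le_card
      (Finset.filter_subset_filter _ (Finset.Ioc_subset_Ioc (hp n) (hq n)))
  have hf : Tendsto (fun n => ((q' n : ℝ) - (p' n : ℝ)) / ((q n : ℝ) - (p n : ℝ)))
      atTop (nhds 1) := by
    have heq : (fun n => ((q' n : ℝ) - (p' n : ℝ)) / ((q n : ℝ) - (p n : ℝ)))
        = fun n => 1 - ((p' n : ℝ) - (p n : ℝ)) / ((q n : ℝ) - (p n : ℝ))
          - ((q n : ℝ) - (q' n : ℝ)) / ((q n : ℝ) - (p n : ℝ)) := by
      funext n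
      field_simp [(hden n).ne']
      ring
    rw [heq]
    simpa using (tendsto_const_nhds.sub hgap₁).sub hgap₂
  have hL : Tendsto L atTop (nhds 1) := by
    have heq : L = fun n => deferredRatio p' q' K n *
        (((q' n : ℝ) - (p' n : ℝ)) / ((q n : ℝ) - (p n : ℝ))) := by
      funext n
      rw [hLdef, deferredRatio]
      field_simp [(hden n).ne', (hden' n).ne']
    rw [heq]
    simpa using hK.mul hf
  exact tendsto_of_tendsto_of_tendsto_of_le_of_le hL tendsto_const_nhds hlower hupper

theorem stmt16 (p q p' q' : ℕ → ℕ)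
    (hpq : DeferredProperty p q) (hpq' : DeferredProperty p' q')
    (hp : ∀ n, p n ≤ p' n) (hq : ∀ n, q' n ≤ q n)
    (hgap₁ : Tendsto (fun n => ((p' n : ℝ) - (p n : ℝ)) / ((q n : ℝ) - (p n : ℝ)))
      atTop (nhds 0))
    (hgap₂ : Tendsto (fun n => ((q n : ℝ) - (q' n : ℝ)) / ((q n : ℝ) - (p n : ℝ)))
      atTop (nhds 0))
    (x : ℕ → E) (l : E) (hx : DStatOrderConv p' q' x l) :
    DStatOrderConv p q x l := by
  obtain ⟨z, ⟨K0, hK0inf, hK0d, hmono, hglb⟩, K, hKinf, hKd, hbound⟩ := hx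
  exact ⟨z, ⟨K0, hK0inf,
      density_transfer p q p' q' hpq.1 hpq'.1 hp hq hgap₁ hgap₂ K0 hK0d, hmono, hglb⟩,
    K, hKinf, density_transfer p q p' q' hpq.1 hpq'.1 hp hq hgap₁ hgap₂ K hKd, hbound⟩
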